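/- Every 2k-regular multigraph admits a 2-factorization, i.e., its edge set can be partitioned into k spanning subgraphs each of which is 2-regular. -/

import Mathlib

open Finset SimpleGraph

open scoped Classical

namespace TwoFactorAux

variable {V : Type*}

lemma exists_cycle [Fintype V] (G : SimpleGraph V)
    (heven : ∀ v, Even (G.degree v)) {a b : V} (hab : G.Adj a b) :
    ∃ (u : V) (c : G.Walk u u), c.IsCycle := by
  by_contra hno
  push_neg at hno
  have hbridge : G.IsBridge s(a, b) := by
    rw [isBridge_iff_adj_and_forall_cycle_notMem (G.mem_edgeSet.mpr hab)]
    exact fun u p hp => absurd hp (hno u p)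
  rw [isBridge_iff] at hbridge
  have hnr := hbridge
  set G' : SimpleGraph V := G \ fromEdgeSet {s(a, b)} with hG'
  have hG'adj : ∀ v w, G'.Adj v w ↔ G.Adj v w ∧ s(v, w) ≠ s(a, b) := by
    intro v w
    rw [hG']
    simp only [sdiff_adj, fromEdgeSet_adj, Set.mem_singleton_iff, not_and, not_ne_iff]
    constructor
    · rintro ⟨h1, h2⟩
      refine ⟨h1, fun he => h1.ne (h2 he)⟩
    · rintro ⟨h1, h2⟩
      exact ⟨h1, fun he => absurd he h2⟩
  -- neighbor finsets of G'
  have hNa : G'.neighborFinset a = (G.neighborFinset a).erase b := by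
    ext w
    rw [mem_neighborFinset, mem_erase, mem_neighborFinset, hG'adj]
    constructor
    · rintro ⟨h1, h2⟩
      exact ⟨fun hw => h2 (by rw [hw]), h1⟩
    · rintro ⟨h1, h2⟩
      refine ⟨h2, fun hc => ?_⟩
      rw [Sym2.eq_iff] at hc
      rcases hc with ⟨-, rfl⟩ | ⟨rfl, rfl⟩
      · exact h1 rfl
      · exact G.irrefl h2
  have hNv : ∀ v, v ≠ a → v ≠ b → G'.neighborFinset v = G.neighborFinset v := by
    intro v hva hvb
    ext w
    rw [mem_neighborFinset, mem_neighborFinset, hG'adj]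
    constructor
    · exact fun h => h.1
    · intro h
      refine ⟨h, fun hc => ?_⟩
      rw [Sym2.eq_iff] at hc
      rcases hc with ⟨h', -⟩ | ⟨h', -⟩
      · exact hva h'
      · exact hvb h' 
  have hdega : G'.degree a = G.degree a - 1 := by
    rw [degree, hNa, card_erase_of_mem (by rwa [mem_neighborFinset]), degree]
  have hdegv : ∀ v, v ≠ a → v ≠ b → G'.degree v = G.degree v := by
    intro v hva hvb; rw [degree, hNv v hva hvb, degree]
  set R : Finset V := univ.filter (fun v => G'.Reachable a v) with hR
  have haR : a ∈ R := by simp only [hR, mem_filter]; exact ⟨mem_univ a, Reachable.refl a⟩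
  have hbR : b ∉ R := by simp [hR]; exact hnr
  -- the subgraph induced on the component of a
  let H : SimpleGraph V :=
    { Adj := fun v w => G'.Adj v w ∧ G'.Reachable a v
      symm := ⟨fun v w h => ⟨h.1.symm, h.2.trans h.1.reachable⟩⟩
      loopless := ⟨fun v h => G'.irrefl h.1⟩ }
  have hHdeg1 : ∀ v ∈ R, H.degree v = G'.degree v := by
    intro v hv
    rw [hR, mem_filter] at hv
    unfold degree
    congr 1
    ext w
    simp only [mem_neighborFinset]
    exact ⟨fun h => h.1, fun h => ⟨h, hv.2⟩⟩
  have hHdeg2 : ∀ v, v ∉ R → H.degree v = 0 := by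
    intro v hv
    rw [hR, mem_filter] at hv
    push_neg at hv
    rw [degree, card_eq_zero]
    ext w
    simp only [mem_neighborFinset, notMem_empty, iff_false]
    intro h
    exact hv (mem_univ v) h.2
  have hsum : ∑ v ∈ R, G'.degree v = ∑ v, H.degree v := by
    rw [← Finset.sum_subset (subset_univ R) (fun x _ hx => hHdeg2 x hx)]
    exact Finset.sum_congr rfl fun v hv => (hHdeg1 v hv).symm
  have hEvenSum : Even (∑ v ∈ R, G'.degree v) := by
    rw [hsum]
    have h2 : ∑ v, H.degree v = 2 * H.edgeFinset.card := by
      convert H.sum_degrees_eq_twice_card_edges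
    rw [h2]
    exact even_two_mul _
  have hsplit : ∑ v ∈ R, G'.degree v = G'.degree a + ∑ v ∈ R.erase a, G'.degree v :=
    (Finset.add_sum_erase R _ haR).symm
  have hEvenT : Even (∑ v ∈ R.erase a, G'.degree v) := by
    apply Finset.even_sum
    intro v hv
    rw [mem_erase] at hv
    rw [hdegv v hv.1 (fun hvb => hbR (hvb ▸ hv.2))]
    exact heven v
  have hOdda : Odd (G'.degree a) := by
    rw [hdega]
    refine Nat.Even.sub_odd ?_ (heven a) odd_one
    have : b ∈ G.neighborFinset a := by rwa [mem_neighborFinset]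
    have := Finset.card_pos.mpr ⟨b, this⟩
    exact this
  rw [hsplit, Nat.even_add] at hEvenSum
  rw [← Nat.not_even_iff_odd] at hOdda
  exact hOdda (hEvenSum.mpr hEvenT)


noncomputable def outD (D : Finset (V × V)) (v : V) : ℕ := (D.filter fun p => p.1 = v).card
noncomputable def inD (D : Finset (V × V)) (v : V) : ℕ := (D.filter fun p => p.2 = v).card

/-- remove the (undirected versions of the) oriented edges in `D` from `G` -/
def removeD (G : SimpleGraph V) (D : Finset (V × V)) : SimpleGraph V where
  Adj v w := G.Adj v w ∧ (v, w) ∉ D ∧ (w, v) ∉ D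
  symm := ⟨fun v w h => ⟨h.1.symm, h.2.2, h.2.1⟩⟩
  loopless := ⟨fun v h => G.irrefl h.1⟩

lemma removeD_adj {G : SimpleGraph V} {D : Finset (V × V)} {v w : V} :
    (removeD G D).Adj v w ↔ G.Adj v w ∧ (v, w) ∉ D ∧ (w, v) ∉ D := Iff.rfl

lemma removeD_le (G : SimpleGraph V) (D : Finset (V × V)) : removeD G D ≤ G :=
  fun _ _ h => h.1

lemma card_filter_toFinset [DecidableEq α] (l : List α) (hl : l.Nodup) (p : α → Prop)
    [DecidablePred p] :
    (l.toFinset.filter p).card = l.countP (fun a => decide (p a)) := by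
  have h1 : l.toFinset.filter p = (l.filter (fun a => decide (p a))).toFinset := by
    rw [List.toFinset_filter]
    apply Finset.filter_congr
    intro x _
    simp
  rw [h1, List.toFinset_card_of_nodup (hl.filter _), List.countP_eq_length_filter]

lemma perm_dropLast_tail {α : Type*} (l : List α) (h1 : l ≠ [])
    (h2 : l.getLast h1 = l.head h1) : l.dropLast.Perm l.tail := by
  cases l with
  | nil => exact absurd rfl h1
  | cons u t =>
    cases t with
    | nil => simp
    | cons y zs =>
      have hne : (y :: zs) ≠ [] := List.cons_ne_nil _ _
      have hlast : (y :: zs).getLast hne = u := by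
        rw [← List.getLast_cons (a := u) hne]
        simpa using h2
      rw [List.dropLast_cons₂, List.tail_cons]
      have hperm : ((y :: zs).dropLast ++ [u]).Perm (u :: (y :: zs).dropLast) :=
        List.perm_append_singleton _ _
      have heq : (y :: zs).dropLast ++ [u] = y :: zs := by
        conv_rhs => rw [← List.dropLast_append_getLast hne]
        rw [hlast]
      rw [heq] at hperm
      exact hperm.symm

section Cycle

variable [Fintype V] {G : SimpleGraph V}

/-- degree decomposition: removing the oriented edges `D` at a vertex removes
`outD D v + inD D v` from the degree. -/
lemma degree_decomp (G : SimpleGraph V) (D : Finset (V × V))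
    (hadj : ∀ p ∈ D, G.Adj p.1 p.2) (hanti : ∀ p ∈ D, (p.2, p.1) ∉ D) (v : V) :
    G.degree v = (removeD G D).degree v + outD D v + inD D v := by
  classical
  set Aout : Finset V := (D.filter fun p => p.1 = v).image Prod.snd with hAout
  set Ain : Finset V := (D.filter fun p => p.2 = v).image Prod.fst with hAin
  have hmemAout : ∀ w, w ∈ Aout ↔ (v, w) ∈ D := by
    intro w
    simp only [hAout, mem_image, mem_filter]
    constructor
    · rintro ⟨p, ⟨hp, rfl⟩, rfl⟩
      exact hp
    · intro h
      exact ⟨(v, w), ⟨h, rfl⟩, rfl⟩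
  have hmemAin : ∀ w, w ∈ Ain ↔ (w, v) ∈ D := by
    intro w
    simp only [hAin, mem_image, mem_filter]
    constructor
    · rintro ⟨p, ⟨hp, rfl⟩, rfl⟩
      exact hp
    · intro h
      exact ⟨(w, v), ⟨h, rfl⟩, rfl⟩
  have hunion : G.neighborFinset v = ((removeD G D).neighborFinset v ∪ Aout) ∪ Ain := by
    ext w
    simp only [mem_union, mem_neighborFinset, hmemAout, hmemAin]
    constructor
    · intro h
      by_cases h1 : (v, w) ∈ D
      · exact Or.inl (Or.inr h1)
      · by_cases h2 : (w, v) ∈ D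
        · exact Or.inr h2
        · exact Or.inl (Or.inl ⟨h, h1, h2⟩)
    · rintro ((h | h) | h)
      · exact h.1
      · exact hadj _ h
      · exact (hadj _ h).symm
  have hd1 : Disjoint ((removeD G D).neighborFinset v) Aout := by
    rw [Finset.disjoint_left]
    intro w hw hw'
    rw [mem_neighborFinset] at hw
    exact hw.2.1 ((hmemAout w).mp hw')
  have hd2 : Disjoint ((removeD G D).neighborFinset v ∪ Aout) Ain := by
    rw [Finset.disjoint_left]
    intro w hw hw'
    rw [hmemAin] at hw'
    rcases Finset.mem_union.mp hw with hw | hw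
    · rw [mem_neighborFinset] at hw
      exact hw.2.2 hw'
    · exact hanti _ hw' ((hmemAout w).mp hw)
  have hcAout : Aout.card = outD D v := by
    rw [hAout, outD, Finset.card_image_of_injOn]
    intro p hp q hq hpq
    simp only [Finset.coe_filter, Set.mem_setOf_eq] at hp hq
    exact Prod.ext (hp.2.trans hq.2.symm) hpq
  have hcAin : Ain.card = inD D v := by
    rw [hAin, inD, Finset.card_image_of_injOn]
    intro p hp q hq hpq
    simp only [Finset.coe_filter, Set.mem_setOf_eq] at hp hq
    exact Prod.ext hpq (hp.2.trans hq.2.symm)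
  rw [degree, hunion, Finset.card_union_of_disjoint hd2, Finset.card_union_of_disjoint hd1,
    hcAout, hcAin, degree]

variable {u : V} {c : G.Walk u u}

/-- the oriented edge set of a cycle -/
noncomputable def cycleD (c : G.Walk u u) : Finset (V × V) :=
  (c.darts.map SimpleGraph.Dart.toProd).toFinset

lemma mem_cycleD {p : V × V} : p ∈ cycleD c ↔ ∃ d ∈ c.darts, d.toProd = p := by
  simp [cycleD]

lemma cycleD_adj (hc : c.IsCycle) {p : V × V} (hp : p ∈ cycleD c) : G.Adj p.1 p.2 := by
  obtain ⟨d, _, rfl⟩ := mem_cycleD.mp hp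
  exact d.adj

lemma cycleD_anti (hc : c.IsCycle) {p : V × V} (hp : p ∈ cycleD c) : (p.2, p.1) ∉ cycleD c := by
  intro hp'
  obtain ⟨d1, hd1, he1⟩ := mem_cycleD.mp hp
  obtain ⟨d2, hd2, he2⟩ := mem_cycleD.mp hp'
  have hnodupe : (c.darts.map SimpleGraph.Dart.edge).Nodup := hc.isTrail.edges_nodup
  have hedge : d1.edge = d2.edge := by
    rw [show d1.edge = s(d1.toProd.1, d1.toProd.2) from rfl, show d2.edge = s(d2.toProd.1, d2.toProd.2) from rfl]
    rw [he1, he2, ← Prod.mk.eta (p := p)]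
    exact Sym2.eq_swap
  have hdd : d1 = d2 := List.inj_on_of_nodup_map hnodupe hd1 hd2 hedge
  have hpp : p = (p.2, p.1) := by
    calc p = d1.toProd := he1.symm
    _ = d2.toProd := by rw [hdd]
    _ = (p.2, p.1) := he2
  exact (cycleD_adj hc hp).ne (congrArg Prod.fst hpp)

lemma cycleD_nodup (hc : c.IsCycle) : (c.darts.map SimpleGraph.Dart.toProd).Nodup := by
  have hnodupe : (c.darts.map SimpleGraph.Dart.edge).Nodup := hc.isTrail.edges_nodup
  exact (hnodupe.of_map _).map SimpleGraph.Dart.toProd_injective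

lemma cycleD_balanced (hc : c.IsCycle) (v : V) : outD (cycleD c) v = inD (cycleD c) v := by
  classical
  rw [outD, inD, cycleD,
    card_filter_toFinset _ (cycleD_nodup hc) _, card_filter_toFinset _ (cycleD_nodup hc) _]
  rw [List.countP_map, List.countP_map]
  have h1 : (List.countP ((fun p => decide (Prod.fst p = v)) ∘ SimpleGraph.Dart.toProd) c.darts)
      = List.countP (fun x => decide (x = v)) (c.darts.map (fun d => d.toProd.1)) := by
    rw [List.countP_map]; rfl
  have h2 : (List.countP ((fun p => decide (Prod.snd p = v)) ∘ SimpleGraph.Dart.toProd) c.darts)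
      = List.countP (fun x => decide (x = v)) (c.darts.map (fun d => d.toProd.2)) := by
    rw [List.countP_map]; rfl
  rw [h1, h2, SimpleGraph.Walk.map_fst_darts, SimpleGraph.Walk.map_snd_darts]
  apply List.Perm.countP_eq
  apply perm_dropLast_tail c.support c.support_ne_nil
  rw [SimpleGraph.Walk.getLast_support, SimpleGraph.Walk.head_support]

end Cycle

lemma exists_orientation [Fintype V] :
    ∀ (n : ℕ) (G : SimpleGraph V), G.edgeFinset.card ≤ n → (∀ v, Even (G.degree v)) →
    ∃ D : Finset (V × V), (∀ p ∈ D, G.Adj p.1 p.2) ∧ (∀ p ∈ D, (p.2, p.1) ∉ D) ∧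
      (∀ v w, G.Adj v w → (v, w) ∈ D ∨ (w, v) ∈ D) ∧ (∀ v, outD D v = inD D v) := by
  intro n
  induction n with
  | zero =>
    intro G hcard _
    refine ⟨∅, by simp, by simp, fun v w h => ?_, by simp [outD, inD]⟩
    exfalso
    rw [Nat.le_zero, Finset.card_eq_zero] at hcard
    have : s(v, w) ∈ G.edgeFinset := by rwa [mem_edgeFinset, mem_edgeSet]
    rw [hcard] at this
    exact absurd this (notMem_empty _)
  | succ n ih =>
    intro G hcard heven
    by_cases hne : G.edgeFinset.Nonempty
    · -- find an adjacency, then a cycle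
      obtain ⟨a, b, hab⟩ : ∃ a b, G.Adj a b := by
        obtain ⟨e, he⟩ := hne
        rw [mem_edgeFinset] at he
        revert he
        refine Sym2.ind (fun x y he => ⟨x, y, he⟩) e
      obtain ⟨w, c, hc⟩ := exists_cycle G heven hab
      set D₀ := cycleD c with hD₀
      have hadj₀ : ∀ p ∈ D₀, G.Adj p.1 p.2 := fun p hp => cycleD_adj hc hp
      have hanti₀ : ∀ p ∈ D₀, (p.2, p.1) ∉ D₀ := fun p hp => cycleD_anti hc hp
      set G' := removeD G D₀ with hG'
      have hdeg : ∀ v, G.degree v = G'.degree v + outD D₀ v + inD D₀ v :=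
        degree_decomp G D₀ hadj₀ hanti₀
      have heven' : ∀ v, Even (G'.degree v) := by
        intro v
        have h := hdeg v
        rw [cycleD_balanced hc v, ← hD₀] at h
        have : G.degree v = G'.degree v + 2 * inD D₀ v := by omega
        have he := heven v
        rw [this] at he
        rcases Nat.even_add.mp he with h'
        exact h'.mpr (even_two_mul _)
      have hlt : G'.edgeFinset.card < G.edgeFinset.card := by
        apply Finset.card_lt_card
        constructor
        · exact SimpleGraph.edgeFinset_subset_edgeFinset.mpr (removeD_le G D₀)
        · intro hsub
          -- the first dart of the cycle gives an edge of G not in G'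
          have hdne : c.darts ≠ [] := by
            intro h
            have := SimpleGraph.Walk.length_darts c
            rw [h] at this
            have h3 := hc.three_le_length
            simp at this
            omega
          obtain ⟨d, hd⟩ := List.exists_mem_of_ne_nil _ hdne
          have hpD : d.toProd ∈ D₀ := mem_cycleD.mpr ⟨d, hd, rfl⟩
          have hin : s(d.toProd.1, d.toProd.2) ∈ G.edgeFinset := by
            rw [mem_edgeFinset, mem_edgeSet]; exact d.adj
          have := hsub hin
          rw [mem_edgeFinset, mem_edgeSet] at this
          exact this.2.1 (by rwa [Prod.mk.eta])
      obtain ⟨D', h1, h2, h3, h4⟩ := ih G' (by omega) heven'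
      have hdisj : Disjoint D' D₀ := by
        rw [Finset.disjoint_left]
        intro p hp hp0
        exact (removeD_adj.mp (h1 p hp)).2.1 (by rwa [Prod.mk.eta])
      refine ⟨D' ∪ D₀, ?_, ?_, ?_, ?_⟩
      · intro p hp
        rcases Finset.mem_union.mp hp with hp | hp
        · exact (removeD_adj.mp (h1 p hp)).1
        · exact hadj₀ p hp
      · intro p hp hps
        rcases Finset.mem_union.mp hp with hp | hp <;>
          rcases Finset.mem_union.mp hps with hps | hps
        · exact h2 p hp hps
        · exact (removeD_adj.mp (h1 p hp)).2.2 hps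
        · exact (removeD_adj.mp (h1 _ hps)).2.2 (by simpa using hp)
        · exact hanti₀ p hp hps
      · intro v w hvw
        by_cases hv : (v, w) ∈ D₀
        · exact Or.inl (Finset.mem_union_right _ hv)
        · by_cases hw : (w, v) ∈ D₀
          · exact Or.inr (Finset.mem_union_right _ hw)
          · rcases h3 v w (removeD_adj.mpr ⟨hvw, hv, hw⟩) with h | h
            · exact Or.inl (Finset.mem_union_left _ h)
            · exact Or.inr (Finset.mem_union_left _ h)
      · intro v
        have hsplit : ∀ (q : V × V → Prop) (_ : DecidablePred q),
            ((D' ∪ D₀).filter q).card = (D'.filter q).card + (D₀.filter q).card := by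
          intro q _
          rw [Finset.filter_union, Finset.card_union_of_disjoint]
          exact Finset.disjoint_filter_filter hdisj
        rw [outD, inD, hsplit _ _, hsplit _ _]
        have hb := cycleD_balanced hc v
        rw [← hD₀] at hb
        have h4' := h4 v
        rw [outD, inD] at hb h4'
        omega
    · -- no edges
      refine ⟨∅, by simp, by simp, fun v w h => ?_, by simp [outD, inD]⟩
      exfalso
      exact hne ⟨s(v, w), by rwa [mem_edgeFinset, mem_edgeSet]⟩


lemma filter_fst_mem_eq_biUnion (D : Finset (V × V)) (s : Finset V) :
    D.filter (fun p => p.1 ∈ s) = s.biUnion (fun v => D.filter fun p => p.1 = v) := by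
  ext p
  simp only [mem_filter, mem_biUnion]
  constructor
  · rintro ⟨hp, hps⟩
    exact ⟨p.1, hps, hp, rfl⟩
  · rintro ⟨v, hv, hp, rfl⟩
    exact ⟨hp, hv⟩

lemma filter_snd_mem_eq_biUnion (D : Finset (V × V)) (s : Finset V) :
    D.filter (fun p => p.2 ∈ s) = s.biUnion (fun v => D.filter fun p => p.2 = v) := by
  ext p
  simp only [mem_filter, mem_biUnion]
  constructor
  · rintro ⟨hp, hps⟩
    exact ⟨p.2, hps, hp, rfl⟩
  · rintro ⟨v, hv, hp, rfl⟩
    exact ⟨hp, hv⟩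

lemma card_filter_fst_mem (D : Finset (V × V)) (s : Finset V) :
    (D.filter (fun p => p.1 ∈ s)).card = ∑ v ∈ s, outD D v := by
  rw [filter_fst_mem_eq_biUnion, Finset.card_biUnion]
  · rfl
  · intro x _ y _ hxy
    rw [Function.onFun, Finset.disjoint_left]
    intro p hp hp'
    rw [mem_filter] at hp hp'
    exact hxy (hp.2 ▸ hp'.2 ▸ rfl)

lemma card_filter_snd_mem (D : Finset (V × V)) (s : Finset V) :
    (D.filter (fun p => p.2 ∈ s)).card = ∑ v ∈ s, inD D v := by
  rw [filter_snd_mem_eq_biUnion, Finset.card_biUnion]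
  · rfl
  · intro x _ y _ hxy
    rw [Function.onFun, Finset.disjoint_left]
    intro p hp hp'
    rw [mem_filter] at hp hp'
    exact hxy (hp.2 ▸ hp'.2 ▸ rfl)

lemma exists_perms [Fintype V] :
    ∀ (k : ℕ) (D : Finset (V × V)), (∀ v, outD D v = k) → (∀ v, inD D v = k) →
    ∃ f : Fin k → (V → V), (∀ i, Function.Bijective (f i)) ∧ (∀ i v, (v, f i v) ∈ D) ∧
      (∀ p ∈ D, ∃! i : Fin k, f i p.1 = p.2) := by
  intro k
  induction k with
  | zero =>
    intro D hout _
    refine ⟨fun i => i.elim0, fun i => i.elim0, fun i => i.elim0, fun p hp => ?_⟩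
    exfalso
    have h0 := hout p.1
    rw [outD, Finset.card_eq_zero] at h0
    have hmem : p ∈ D.filter (fun q => q.1 = p.1) := Finset.mem_filter.mpr ⟨hp, rfl⟩
    rw [h0] at hmem
    exact absurd hmem (notMem_empty _)
  | succ k ihk =>
    intro D hout hinn
    set t : V → Finset V := fun v => (D.filter fun p => p.1 = v).image Prod.snd with ht
    have hmemt : ∀ v w, w ∈ t v ↔ (v, w) ∈ D := by
      intro v w
      simp only [ht, mem_image, mem_filter]
      constructor
      · rintro ⟨p, ⟨hp, rfl⟩, rfl⟩
        exact hp
      · intro h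
        exact ⟨(v, w), ⟨h, rfl⟩, rfl⟩
    have hcardt : ∀ v, (t v).card = k + 1 := by
      intro v
      rw [ht]
      have : ((D.filter fun p => p.1 = v).image Prod.snd).card
          = (D.filter fun p => p.1 = v).card := by
        apply Finset.card_image_of_injOn
        intro p hp q hq hpq
        simp only [Finset.coe_filter, Set.mem_setOf_eq] at hp hq
        exact Prod.ext (hp.2.trans hq.2.symm) hpq
      rw [this]
      exact hout v
    have hHall : ∀ s : Finset V, s.card ≤ (s.biUnion t).card := by
      intro s
      set N := s.biUnion t with hN
      have hcount1 : (D.filter fun p => p.1 ∈ s).card = (k + 1) * s.card := by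
        rw [card_filter_fst_mem, Finset.sum_congr rfl (fun v _ => hout v),
          Finset.sum_const, smul_eq_mul, mul_comm]
      have hcount2 : (D.filter fun p => p.2 ∈ N).card = (k + 1) * N.card := by
        rw [card_filter_snd_mem, Finset.sum_congr rfl (fun v _ => hinn v),
          Finset.sum_const, smul_eq_mul, mul_comm]
      have hsub : D.filter (fun p => p.1 ∈ s) ⊆ D.filter (fun p => p.2 ∈ N) := by
        intro p hp
        rw [mem_filter] at hp ⊢
        refine ⟨hp.1, ?_⟩
        rw [hN]
        apply Finset.mem_biUnion.mpr
        exact ⟨p.1, hp.2, (hmemt p.1 p.2).mpr hp.1⟩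
      have hle := Finset.card_le_card hsub
      rw [hcount1, hcount2] at hle
      exact Nat.le_of_mul_le_mul_left hle (Nat.succ_pos k)
    obtain ⟨g, hginj, hgmem⟩ := (Finset.all_card_le_biUnion_card_iff_exists_injective t).mp hHall
    have hgD : ∀ v, (v, g v) ∈ D := fun v => (hmemt v (g v)).mp (hgmem v)
    have hgbij : Function.Bijective g := Finite.injective_iff_bijective.mp hginj
    set M : Finset (V × V) := univ.image (fun v => (v, g v)) with hM
    have hmemM : ∀ p : V × V, p ∈ M ↔ p.2 = g p.1 := by
      intro p
      rw [hM]
      simp only [mem_image, mem_univ, true_and]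
      constructor
      · rintro ⟨v, rfl⟩
        rfl
      · intro h
        exact ⟨p.1, by rw [← h]⟩
    set D' := D \ M with hD'
    have hout' : ∀ v, outD D' v = k := by
      intro v
      have heq : D'.filter (fun p => p.1 = v) = (D.filter fun p => p.1 = v) \ {(v, g v)} := by
        ext p
        rw [mem_filter, hD', mem_sdiff, mem_sdiff, mem_filter, mem_singleton, hmemM]
        constructor
        · rintro ⟨⟨hp, hpm⟩, hp1⟩
          refine ⟨⟨hp, hp1⟩, fun hc => hpm ?_⟩
          rw [hc]
        · rintro ⟨⟨hp, hp1⟩, hne⟩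
          refine ⟨⟨hp, fun hc => hne ?_⟩, hp1⟩
          exact Prod.ext hp1 (by rw [hc, hp1])
      rw [outD, heq, Finset.card_sdiff_of_subset (by
        rw [Finset.singleton_subset_iff, mem_filter]
        exact ⟨hgD v, rfl⟩)]
      rw [Finset.card_singleton]
      have := hout v
      rw [outD] at this
      omega
    have hinn' : ∀ v, inD D' v = k := by
      intro v
      obtain ⟨a, ha⟩ := hgbij.surjective v
      have heq : D'.filter (fun p => p.2 = v) = (D.filter fun p => p.2 = v) \ {(a, v)} := by
        ext p
        rw [mem_filter, hD', mem_sdiff, mem_sdiff, mem_filter, mem_singleton, hmemM]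
        constructor
        · rintro ⟨⟨hp, hpm⟩, hp2⟩
          refine ⟨⟨hp, hp2⟩, fun hc => hpm ?_⟩
          rw [hc]
          exact ha.symm
        · rintro ⟨⟨hp, hp2⟩, hne⟩
          refine ⟨⟨hp, fun hc => hne ?_⟩, hp2⟩
          have hp1 : p.1 = a := hginj (by rw [← hc, hp2, ha])
          rw [← hp2, ← hp1]
      rw [inD, heq, Finset.card_sdiff_of_subset (by
        rw [Finset.singleton_subset_iff, mem_filter]
        exact ⟨by rw [← ha]; exact hgD a, rfl⟩)]
      rw [Finset.card_singleton]
      have := hinn v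
      rw [inD] at this
      omega
    obtain ⟨f', hf'bij, hf'mem, hf'uniq⟩ := ihk D' hout' hinn'
    have hD'sub : D' ⊆ D := Finset.sdiff_subset
    refine ⟨Fin.cons g f', ?_, ?_, ?_⟩
    · intro i
      induction i using Fin.cases with
      | zero => simp only [Fin.cons_zero]; exact hgbij
      | succ j => simp only [Fin.cons_succ]; exact hf'bij j
    · intro i v
      induction i using Fin.cases with
      | zero => simp only [Fin.cons_zero]; exact hgD v
      | succ j => simp only [Fin.cons_succ]; exact hD'sub (hf'mem j v)
    · intro p hp
      by_cases hp0 : p.2 = g p.1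
      · refine ⟨0, ?_, ?_⟩
        · simp only [Fin.cons_zero]; exact hp0.symm
        · intro j hj
          induction j using Fin.cases with
          | zero => rfl
          | succ i =>
            exfalso
            simp only [Fin.cons_succ] at hj
            have hmem := hf'mem i p.1
            rw [hj] at hmem
            rw [hD', mem_sdiff] at hmem
            exact hmem.2 ((hmemM p).mpr hp0)
      · have hpD' : p ∈ D' := by
          rw [hD', mem_sdiff]
          exact ⟨hp, fun hm => hp0 ((hmemM p).mp hm)⟩
        obtain ⟨i, hi, hiu⟩ := hf'uniq p hpD'
        refine ⟨i.succ, ?_, ?_⟩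
        · simp only [Fin.cons_succ]; exact hi
        · intro j hj
          induction j using Fin.cases with
          | zero =>
            simp only [Fin.cons_zero] at hj
            exact absurd hj.symm hp0
          | succ i' =>
            simp only [Fin.cons_succ] at hj
            rw [hiu i' hj]


lemma degree_eq_two [Fintype V] {G : SimpleGraph V} {v a b : V} [Fintype (G.neighborSet v)]
    (hab : a ≠ b) (h : ∀ w, G.Adj v w ↔ (w = a ∨ w = b)) : G.degree v = 2 := by
  have hN : G.neighborFinset v = {a, b} := by
    ext w
    rw [mem_neighborFinset, h, Finset.mem_insert, Finset.mem_singleton]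
  rw [degree, hN, Finset.card_insert_of_notMem (by simpa using hab), Finset.card_singleton]

lemma orientation_regular [Fintype V] {G : SimpleGraph V} {k : ℕ}
    (hreg : G.IsRegularOfDegree (2 * k)) :
    ∃ D : Finset (V × V), (∀ p ∈ D, G.Adj p.1 p.2) ∧ (∀ p ∈ D, (p.2, p.1) ∉ D) ∧
      (∀ v w, G.Adj v w → (v, w) ∈ D ∨ (w, v) ∈ D) ∧
      (∀ v, outD D v = k) ∧ (∀ v, inD D v = k) := by
  have heven : ∀ v, Even (G.degree v) := fun v => by rw [hreg v]; exact even_two_mul k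
  obtain ⟨D, hadj, hanti, hcover, hbal⟩ :=
    exists_orientation G.edgeFinset.card G le_rfl heven
  have hdeg0 : ∀ v, (removeD G D).degree v = 0 := by
    intro v
    rw [degree, Finset.card_eq_zero]
    ext w
    simp only [mem_neighborFinset, notMem_empty, iff_false]
    intro h
    rw [removeD_adj] at h
    rcases hcover v w h.1 with hc | hc
    · exact h.2.1 hc
    · exact h.2.2 hc
  have hout : ∀ v, outD D v = k := by
    intro v
    have h := degree_decomp G D hadj hanti v
    rw [hreg v, hdeg0 v, hbal v] at h
    rw [hbal v]
    omega
  refine ⟨D, hadj, hanti, hcover, hout, fun v => ?_⟩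
  rw [← hbal v]
  exact hout v

end TwoFactorAux

open TwoFactorAux in
open scoped Classical in
/-- Every `2k`-regular graph admits a 2-factorization: a family of `k` spanning 2-regular
subgraphs that partition the edge set. -/
theorem stmt_1 {V : Type*} [Fintype V] (G : SimpleGraph V) (k : ℕ)
    (hreg : G.IsRegularOfDegree (2 * k)) :
    ∃ F : Fin k → SimpleGraph V,
      (∀ i, F i ≤ G ∧ (F i).IsRegularOfDegree 2) ∧
      (∀ e ∈ G.edgeSet, ∃! i, e ∈ (F i).edgeSet) := by
  obtain ⟨D, hadj, hanti, hcover, hout, hinn⟩ := orientation_regular hreg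
  obtain ⟨f, hbij, hmem, huniq⟩ := exists_perms k D hout hinn
  obtain ⟨F, hFadj⟩ : ∃ F : Fin k → SimpleGraph V,
      ∀ i v w, (F i).Adj v w ↔ (f i v = w ∨ f i w = v) :=
    ⟨fun i =>
      { Adj := fun v w => f i v = w ∨ f i w = v
        symm := ⟨fun v w h => h.symm⟩
        loopless := ⟨fun v h => by
          have hvv : (v, v) ∈ D := by
            have h' : f i v = v := by rcases h with h | h <;> exact h
            have := hmem i v
            rw [h'] at this
            exact this
          exact (hadj _ hvv).ne rfl⟩ }, fun _ _ _ => Iff.rfl⟩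
  refine ⟨F, fun i => ⟨?_, ?_⟩, ?_⟩
  · -- F i ≤ G
    intro v w h
    rcases (hFadj i v w).mp h with h | h
    · exact h ▸ (hadj _ (hmem i v) : G.Adj v (f i v))
    · exact (h ▸ (hadj _ (hmem i w) : G.Adj w (f i w))).symm
  · -- 2-regular
    intro v
    obtain ⟨a, ha⟩ := (hbij i).surjective v
    have hne : f i v ≠ a := by
      intro hcon
      have h1 : (v, f i v) ∈ D := hmem i v
      have h2 : (a, v) ∈ D := by
        have := hmem i a
        rw [ha] at this
        exact this
      rw [hcon] at h1
      exact hanti (v, a) h1 h2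
    apply degree_eq_two hne
    intro w
    rw [hFadj]
    constructor
    · rintro (h | h)
      · exact Or.inl h.symm
      · exact Or.inr ((hbij i).injective (h.trans ha.symm))
    · rintro (rfl | rfl)
      · exact Or.inl rfl
      · exact Or.inr ha
  · -- partition of the edge set
    intro e
    refine Sym2.ind (fun v w he => ?_) e
    have hvw : G.Adj v w := G.mem_edgeSet.mp he
    rcases hcover v w hvw with hD | hD
    · obtain ⟨i, hi, hiu⟩ := huniq (v, w) hD
      refine ⟨i, ?_, ?_⟩
      · exact (F i).mem_edgeSet.mpr ((hFadj i v w).mpr (Or.inl hi))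
      · intro j hj
        have hj2 : (F j).Adj v w := (F j).mem_edgeSet.mp hj
        rcases (hFadj j v w).mp hj2 with hj' | hj'
        · exact hiu j hj'
        · exfalso
          have hmemj := hmem j w
          rw [hj'] at hmemj
          exact hanti (v, w) hD hmemj
    · obtain ⟨i, hi, hiu⟩ := huniq (w, v) hD
      refine ⟨i, ?_, ?_⟩
      · exact (F i).mem_edgeSet.mpr ((hFadj i v w).mpr (Or.inr hi))
      · intro j hj
        have hj2 : (F j).Adj v w := (F j).mem_edgeSet.mp hj
        rcases (hFadj j v w).mp hj2 with hj' | hj'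
        · exfalso
          have hmemj := hmem j v
          rw [hj'] at hmemj
          exact hanti (w, v) hD hmemj
        · exact hiu j hj'
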